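/- arXiv:1807.00744 — 6 statements merged into one kernel-verified Lean document; each statement's English description precedes it below -/
import Mathlib

section
/- If a junction tree J satisfies the running intersection property, and a new node n labeled with cluster C(n) is attached by an edge to an existing node m, where every variable in C(n) is either contained in C(m) or does not occur in any existing node of J, then the resulting tree still satisfies the running intersection property. -/
/-- Attaching a new node n (cluster Cn) to node m of a junction tree, where every
variable of Cn is either in C m or occurs in no existing node, preserves the running
intersection property. The new tree is modelled on V ⊕ Unit with the new node inr (). -/
theorem stmt_1 {V Var : Type*} (G : SimpleGraph V) (hT : G.IsTree)
    (C : V → Set Var)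
    (RIP : ∀ (i j k : V) (p : G.Walk i j), p.IsPath → k ∈ p.support → C i ∩ C j ⊆ C k)
    (m : V) (Cn : Set Var)
    (hnew : ∀ x ∈ Cn, x ∈ C m ∨ ∀ i : V, x ∉ C i)
    (G' : SimpleGraph (V ⊕ Unit))
    (hG' : ∀ a b : V ⊕ Unit, G'.Adj a b ↔
      ((∃ a' b', a = Sum.inl a' ∧ b = Sum.inl b' ∧ G.Adj a' b') ∨
        (a = Sum.inl m ∧ b = Sum.inr ()) ∨ (a = Sum.inr () ∧ b = Sum.inl m))) :
    ∀ (i j k : V ⊕ Unit) (p : G'.Walk i j), p.IsPath → k ∈ p.support →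
      Sum.elim C (fun _ => Cn) i ∩ Sum.elim C (fun _ => Cn) j
        ⊆ Sum.elim C (fun _ => Cn) k := by
  -- Projection: a G'-path between inl vertices projects to a G-path.
  have proj : ∀ (u v : V ⊕ Unit) (p : G'.Walk u v), p.IsPath →
      ∀ (a b : V), u = Sum.inl a → v = Sum.inl b →
      ∃ q : G.Walk a b, q.IsPath ∧ p.support = q.support.map Sum.inl := by
    intro u v p
    induction p with
    | nil =>
      intro hp a b ha hb
      subst ha
      obtain rfl : a = b := Sum.inl.inj hb
      exact ⟨SimpleGraph.Walk.nil, SimpleGraph.Walk.IsPath.nil, rfl⟩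
    | cons h p ih =>
      rename_i u' w' v'
      intro hp a b ha hb
      subst ha hb
      rcases (hG' _ _).1 h with ⟨a', b', ha', hw, hadj⟩ | ⟨hm, hw⟩ | ⟨hu, _⟩
      · obtain rfl : a = a' := Sum.inl.inj ha'
        subst hw
        rw [SimpleGraph.Walk.cons_isPath_iff] at hp
        obtain ⟨q, hq, hsupp⟩ := ih hp.1 b' b rfl rfl
        refine ⟨SimpleGraph.Walk.cons hadj q, ?_, ?_⟩
        · rw [SimpleGraph.Walk.cons_isPath_iff]
          refine ⟨hq, fun hmem => hp.2 ?_⟩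
          rw [hsupp]
          exact List.mem_map_of_mem hmem
        · simp [SimpleGraph.Walk.support_cons, hsupp]
      · -- w' = inr (), so the path continues from inr () and must return to inl m
        subst hw
        cases p with
        | cons h2 p2 =>
          rename_i w2
          rcases (hG' _ _).1 h2 with ⟨a', b', ha', _, _⟩ | ⟨hm2, _⟩ | ⟨_, hw2⟩
          · simp at ha'
          · simp at hm2
          · subst hw2
            obtain rfl : a = m := Sum.inl.inj hm
            exfalso
            rw [SimpleGraph.Walk.cons_isPath_iff] at hp
            apply hp.2
            rw [SimpleGraph.Walk.support_cons]
            exact List.mem_cons_of_mem _ p2.start_mem_support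
      · simp at hu
  -- Case i = inr (): the path is inr () :: (path from inl m).
  have fromNew : ∀ (j k : V ⊕ Unit) (p : G'.Walk (Sum.inr ()) j), p.IsPath → k ∈ p.support →
      Sum.elim C (fun _ => Cn) (Sum.inr ()) ∩ Sum.elim C (fun _ => Cn) j
        ⊆ Sum.elim C (fun _ => Cn) k := by
    intro j k p hp hk
    cases p with
    | nil =>
      simp only [SimpleGraph.Walk.support_nil, List.mem_singleton] at hk
      subst hk
      exact Set.inter_subset_left
    | cons h p =>
      rename_i w
      rcases (hG' _ _).1 h with ⟨a', b', ha', _, _⟩ | ⟨hm2, _⟩ | ⟨_, hw2⟩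
      · simp at ha'
      · simp at hm2
      · subst hw2
        rw [SimpleGraph.Walk.cons_isPath_iff] at hp
        cases j with
        | inr u =>
          exfalso
          exact hp.2 p.end_mem_support
        | inl j' =>
          obtain ⟨q, hq, hsupp⟩ := proj _ _ p hp.1 m j' rfl rfl
          intro x hx
          simp only [Set.mem_inter_iff, Sum.elim_inr, Sum.elim_inl] at hx
          have hxm : x ∈ C m := by
            rcases hnew x hx.1 with h' | h'
            · exact h'
            · exact absurd hx.2 (h' j')
          rw [SimpleGraph.Walk.support_cons] at hk
          rcases List.mem_cons.1 hk with rfl | hk'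
          · exact hx.1
          · rw [hsupp] at hk'
            rcases List.mem_map.1 hk' with ⟨k', hk'', rfl⟩
            exact RIP m j' k' q hq hk'' ⟨hxm, hx.2⟩
  intro i j k p hp hk
  cases i with
  | inr u =>
    cases u
    exact fromNew j k p hp hk
  | inl i' =>
    cases j with
    | inr u =>
      cases u
      intro x hx
      have := fromNew (Sum.inl i') k p.reverse hp.reverse
        (by rw [SimpleGraph.Walk.support_reverse]; exact List.mem_reverse.2 hk)
      exact this ⟨hx.2, hx.1⟩
    | inl j' =>
      obtain ⟨q, hq, hsupp⟩ := proj _ _ p hp i' j' rfl rfl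
      rw [hsupp] at hk
      rcases List.mem_map.1 hk with ⟨k', hk', rfl⟩
      exact RIP i' j' k' q hq hk'
end

section
/- Let J be a junction tree satisfying the running intersection property, let i–j be an edge, and let v be a variable that occurs only in cluster C(i) among all nodes of J. Adding v to cluster C(j) preserves the running intersection property. -/
/-- If variable v occurs only in cluster C i among all nodes, and i–j is an edge, then
adding v to C j preserves the running intersection property. -/
theorem stmt_2 {V Var : Type*} [DecidableEq V] (G : SimpleGraph V) (hT : G.IsTree)
    (C : V → Set Var)
    (RIP : ∀ (a b k : V) (p : G.Walk a b), p.IsPath → k ∈ p.support → C a ∩ C b ⊆ C k)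
    (i j : V) (hij : G.Adj i j)
    (v : Var) (hv : ∀ k : V, v ∈ C k → k = i) :
    ∀ (a b k : V) (p : G.Walk a b), p.IsPath → k ∈ p.support →
      (if a = j then C j ∪ {v} else C a) ∩ (if b = j then C j ∪ {v} else C b)
        ⊆ (if k = j then C j ∪ {v} else C k) := by
  have nilcase : ∀ (a : V) (p : G.Walk a a), p.IsPath → p = SimpleGraph.Walk.nil := by
    intro a p hp
    have h := hT.existsUnique_path a a
    exact h.unique hp SimpleGraph.Walk.IsPath.nil
  have edgecase : ∀ (a b : V) (hab : G.Adj a b) (p : G.Walk a b), p.IsPath →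
      p = SimpleGraph.Walk.cons hab SimpleGraph.Walk.nil := by
    intro a b hab p hp
    have hcons : (SimpleGraph.Walk.cons hab SimpleGraph.Walk.nil).IsPath := by
      simp [SimpleGraph.Walk.isPath_def, hab.ne]
    exact (hT.existsUnique_path a b).unique hp hcons
  intro a b k p hp hk x hx
  obtain ⟨hxa, hxb⟩ := hx
  by_cases hxv : x = v
  · rw [hxv] at hxa hxb ⊢
    clear hxv
    have ha : a = j ∨ (a = i ∧ v ∈ C a) := by
      by_cases h : a = j
      · exact Or.inl h
      · simp only [h, if_false] at hxa
        exact Or.inr ⟨hv a hxa, hxa⟩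
    have hb : b = j ∨ (b = i ∧ v ∈ C b) := by
      by_cases h : b = j
      · exact Or.inl h
      · simp only [h, if_false] at hxb
        exact Or.inr ⟨hv b hxb, hxb⟩
    rcases ha with ha | ⟨hai, hva⟩ <;> rcases hb with hb | ⟨hbi, hvb⟩
    · -- a = j, b = j : path is nil, k = j
      obtain rfl : j = a := ha.symm; obtain rfl : j = b := hb.symm
      have := nilcase j p hp
      subst this
      simp at hk
      simp [hk]
    · -- a = j, b = i
      obtain rfl : j = a := ha.symm; obtain rfl : i = b := hbi.symm
      have := edgecase j i hij.symm p hp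
      subst this
      simp at hk
      rcases hk with hk | hk
      · simp [hk]
      · subst hk
        have : k ≠ j := hij.ne
        simp [this, hvb]
    · -- a = i, b = j
      obtain rfl : i = a := hai.symm; obtain rfl : j = b := hb.symm
      have := edgecase i j hij p hp
      subst this
      simp at hk
      rcases hk with hk | hk
      · subst hk
        have : k ≠ j := hij.ne
        simp [this, hva]
      · simp [hk]
    · -- a = i, b = i
      obtain rfl : i = a := hai.symm; obtain rfl : i = b := hbi.symm
      have := nilcase i p hp
      subst this
      simp at hk
      subst hk
      by_cases h : k = j
      · simp [h]
      · simp [h, hva]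
  · -- x ≠ v
    have hxa' : x ∈ C a := by
      by_cases h : a = j
      · rw [h]
        rcases (show x ∈ C j ∪ {v} by simpa [h] using hxa) with h' | h'
        · exact h'
        · exact absurd h' hxv
      · simpa [h] using hxa
    have hxb' : x ∈ C b := by
      by_cases h : b = j
      · rw [h]
        rcases (show x ∈ C j ∪ {v} by simpa [h] using hxb) with h' | h'
        · exact h'
        · exact absurd h' hxv
      · simpa [h] using hxb
    have hck := RIP a b k p hp hk ⟨hxa', hxb'⟩
    by_cases h : k = j
    · rw [if_pos h]; rw [h] at hck; exact Or.inl hck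
    · rw [if_neg h]; exact hck
end

section
/- Let R and S be finite types, φ : R × S → ℝ≥0, X a finite index set, and define for a histogram h : R → ℕ the count-converted factor φ'(h, s) = Π_{r ∈ R} φ(r, s)^{h(r)}. Then for any s ∈ S, the sum over all assignments f : X → R of Π_{x ∈ X} φ(f(x), s) equals the sum over all histograms h with Σ_r h(r) = |X| of Mul(h) · φ'(h, s), where Mul(h) = |X|! / Π_r h(r)! is the multinomial coefficient. -/
open Finset

/-- Summation over assignments reorganized by histograms: the ground sum equals the
sum over histograms of the multinomial coefficient times the count-converted factor. -/
theorem stmt_7 {X R S : Type*} [Fintype X] [DecidableEq X] [Fintype R] [DecidableEq R]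
    (φ : R × S → NNReal) (s : S) :
    ∑ f : X → R, ∏ x : X, φ (f x, s)
      = ∑ h ∈ (Fintype.piFinset fun _ : R => Finset.range (Fintype.card X + 1)).filter
            (fun h => ∑ r : R, h r = Fintype.card X),
          ((Nat.factorial (Fintype.card X) / ∏ r : R, Nat.factorial (h r) : ℕ) : NNReal)
            * ∏ r : R, φ (r, s) ^ h r := by
  have hset : (Fintype.piFinset fun _ : R => Finset.range (Fintype.card X + 1)).filter
      (fun h => ∑ r : R, h r = Fintype.card X)
      = Finset.piAntidiag Finset.univ (Fintype.card X) := by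
    ext h
    simp only [mem_filter, Fintype.mem_piFinset, mem_range, Finset.mem_piAntidiag,
      mem_univ, implies_true, and_true]
    constructor
    · rintro ⟨_, h2⟩; exact h2
    · intro h1
      refine ⟨fun r => ?_, h1⟩
      have := Finset.single_le_sum (f := h) (fun i _ => Nat.zero_le _) (mem_univ r)
      rw [h1] at this
      omega
  rw [hset]
  have hlhs : ∑ f : X → R, ∏ x : X, φ (f x, s) = (∑ r : R, φ (r, s)) ^ Fintype.card X := by
    rw [← Fintype.piFinset_univ,
      ← Finset.prod_univ_sum (fun _ : X => (Finset.univ : Finset R)) (fun _ r => φ (r, s)),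
      Finset.prod_const, Finset.card_univ]
  rw [hlhs, Finset.sum_pow_eq_sum_piAntidiag]
  refine Finset.sum_congr rfl fun h hh => ?_
  have hsum : ∑ r : R, h r = Fintype.card X := (Finset.mem_piAntidiag.1 hh).1
  congr 1
  rw [Nat.multinomial, hsum]
end

section
/- Consider a finite collection of factors {φ_i : A_i → ℝ≥0} over finite variable ranges, defining an unnormalized distribution P(a) = Π_i φ_i(a|_{A_i}) over joint assignments a. If the variables are partitioned into sets U, I, W such that every factor depends only on variables within U ∪ I or within I ∪ W (no factor mentions both a variable in U and a variable in W), then the marginal on W of P, after fixing the values on I, factorizes: Σ_{u} P(u, i, w) = (Σ_u Π_{factors on U∪I} φ(u,i)) · (Π_{factors on I∪W} φ(i,w)). -/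
open Finset

/-- m-separation via an interface: if every factor's scope lies within U ∪ I or within
I ∪ W, then marginalizing the factor product over the U-variables (fixing I and W as in
the assignment a) factorizes into a message over I times the product of I∪W factors. -/
theorem stmt_8 {Var : Type*} [Fintype Var] [DecidableEq Var]
    (Val : Var → Type*) [∀ v, Fintype (Val v)] [∀ v, DecidableEq (Val v)]
    {ι : Type*} [Fintype ι] [DecidableEq ι]
    (A : ι → Finset Var) (φ : ι → (∀ v, Val v) → NNReal)
    (hscope : ∀ (i : ι) (a b : ∀ v, Val v), (∀ v ∈ A i, a v = b v) → φ i a = φ i b)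
    (U I W : Finset Var)
    (hUI : Disjoint U I) (hUW : Disjoint U W) (hIW : Disjoint I W)
    (hcover : U ∪ I ∪ W = Finset.univ)
    (F₁ : Finset ι)
    (h₁ : ∀ i ∈ F₁, A i ⊆ U ∪ I) (h₂ : ∀ i ∉ F₁, A i ⊆ I ∪ W)
    (a : ∀ v, Val v) :
    ∑ b ∈ Finset.univ.filter (fun b : ∀ v, Val v => ∀ v ∈ I ∪ W, b v = a v),
        ∏ i : ι, φ i b
      = (∑ b ∈ Finset.univ.filter (fun b : ∀ v, Val v => ∀ v ∈ I ∪ W, b v = a v),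
            ∏ i ∈ F₁, φ i b)
          * ∏ i ∈ F₁ᶜ, φ i a := by
  rw [Finset.sum_mul]
  refine Finset.sum_congr rfl fun b hb => ?_
  simp only [Finset.mem_filter] at hb
  rw [← Finset.prod_mul_prod_compl F₁ (fun i => φ i b)]
  congr 1
  refine Finset.prod_congr rfl fun i hi => ?_
  exact hscope i b a fun v hv => hb.2 v (h₂ i (Finset.mem_compl.mp hi) hv)
end

section
/- Let J be a junction tree over factors {φ_c} assigned to its nodes (each factor's scope contained in its node's cluster), satisfying the running intersection property. Fix an edge i–j with separator S = C(i)∩C(j), splitting J into components T_i and T_j. Then the sum over all assignments to variables occurring only in T_i of the product of factors assigned to nodes in T_i depends only on the assignment restricted to S. -/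
open Finset
open scoped Classical

/-- Key separator lemma: if `x ∈ C k` with `k` in the `i`-component and `x ∈ C k'` with
`k'` in the `j`-component, then `x ∈ C i ∩ C j`. -/
lemma sep_lemma {V Var : Type*} (G : SimpleGraph V) (hT : G.IsTree) (C : V → Set Var)
    (RIP : ∀ (a b k : V) (p : G.Walk a b), p.IsPath → k ∈ p.support → C a ∩ C b ⊆ C k)
    (i j : V) (hij : G.Adj i j) {k k' : V} {x : Var}
    (hk : (G.deleteEdges {s(i, j)}).Reachable k i)
    (hk' : (G.deleteEdges {s(i, j)}).Reachable k' j)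
    (hx : x ∈ C k) (hx' : x ∈ C k') : x ∈ C i ∩ C j := by
  classical
  -- the edge i-j is a bridge
  have hbridge : G.IsBridge s(i, j) :=
    (SimpleGraph.isAcyclic_iff_forall_adj_isBridge.mp hT.2) hij
  have hforall : ∀ p : G.Walk k k', s(i, j) ∈ p.edges := by
    intro p
    by_contra hmem
    have hp' : (G.deleteEdges {s(i, j)}).Walk k k' :=
      p.toDeleteEdges {s(i, j)} (by intro e he hes; rw [Set.mem_singleton_iff] at hes
                                    exact hmem (hes ▸ he))
    have : (G.deleteEdges {s(i, j)}).Reachable i j :=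
      (hk.symm.trans ⟨hp'⟩).trans hk'
    exact ((SimpleGraph.isBridge_iff).mp hbridge) this
  -- take a path from k to k'
  obtain ⟨p, hp⟩ := (hT.existsUnique_path k k').exists
  have hedge := hforall p
  have hi : i ∈ p.support := SimpleGraph.Walk.fst_mem_support_of_mem_edges p hedge
  have hj : j ∈ p.support := SimpleGraph.Walk.snd_mem_support_of_mem_edges p hedge
  exact ⟨RIP k k' i p hp hi ⟨hx, hx'⟩, RIP k k' j p hp hj ⟨hx, hx'⟩⟩

/-- The message over a separator is well-defined: in a junction tree with factors
assigned to nodes (scopes within clusters), for an edge i–j, summing the product of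
the factors of i's component T_i over the variables occurring only in T_i yields a
function depending only on the assignment restricted to the separator C i ∩ C j. -/
theorem stmt_9 {V Var : Type*} [Fintype V] [Fintype Var] (G : SimpleGraph V)
    (hT : G.IsTree) (C : V → Set Var)
    (RIP : ∀ (a b k : V) (p : G.Walk a b), p.IsPath → k ∈ p.support → C a ∩ C b ⊆ C k)
    (Val : Var → Type*) [∀ v, Fintype (Val v)]
    (φ : V → (∀ v, Val v) → NNReal)
    (hscope : ∀ (k : V) (a b : ∀ v, Val v), (∀ v ∈ C k, a v = b v) → φ k a = φ k b)
    (i j : V) (hij : G.Adj i j)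
    (a a' : ∀ v, Val v) (hS : ∀ x ∈ C i ∩ C j, a x = a' x) :
    ∑ b ∈ Finset.univ.filter (fun b : ∀ v, Val v =>
          ∀ x : Var, ¬((∃ k, (G.deleteEdges {s(i, j)}).Reachable k i ∧ x ∈ C k) ∧
              ∀ k, (G.deleteEdges {s(i, j)}).Reachable k j → x ∉ C k) → b x = a x),
        ∏ k ∈ Finset.univ.filter (fun k => (G.deleteEdges {s(i, j)}).Reachable k i),
          φ k b
      = ∑ b ∈ Finset.univ.filter (fun b : ∀ v, Val v =>
          ∀ x : Var, ¬((∃ k, (G.deleteEdges {s(i, j)}).Reachable k i ∧ x ∈ C k) ∧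
              ∀ k, (G.deleteEdges {s(i, j)}).Reachable k j → x ∉ C k) → b x = a' x),
        ∏ k ∈ Finset.univ.filter (fun k => (G.deleteEdges {s(i, j)}).Reachable k i),
          φ k b := by
  classical
  set P : Var → Prop := fun x =>
    (∃ k, (G.deleteEdges {s(i, j)}).Reachable k i ∧ x ∈ C k) ∧
      ∀ k, (G.deleteEdges {s(i, j)}).Reachable k j → x ∉ C k with hP
  -- for variables in C k (k in T_i) not satisfying P, a x = a' x
  have hkey : ∀ (k : V), (G.deleteEdges {s(i, j)}).Reachable k i →
      ∀ x ∈ C k, ¬ P x → a x = a' x := by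
    intro k hk x hx hnP
    have h1 : ∃ k, (G.deleteEdges {s(i, j)}).Reachable k i ∧ x ∈ C k := ⟨k, hk, hx⟩
    have h2 : ¬ ∀ k', (G.deleteEdges {s(i, j)}).Reachable k' j → x ∉ C k' :=
      fun h => hnP ⟨h1, h⟩
    push_neg at h2
    obtain ⟨k', hk', hxk'⟩ := h2
    exact hS x (sep_lemma G hT C RIP i j hij hk hk' hx hxk')
  refine Finset.sum_nbij' (fun b x => if P x then b x else a' x)
    (fun b x => if P x then b x else a x) ?_ ?_ ?_ ?_ ?_
  · intro b hb
    simp only [Finset.mem_filter, Finset.mem_univ, true_and] at hb ⊢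
    intro x hnP
    exact if_neg hnP
  · intro b hb
    simp only [Finset.mem_filter, Finset.mem_univ, true_and] at hb ⊢
    intro x hnP
    exact if_neg hnP
  · intro b hb
    simp only [Finset.mem_filter, Finset.mem_univ, true_and] at hb
    funext x
    dsimp only
    by_cases hx : P x
    · rw [if_pos hx, if_pos hx]
    · rw [if_neg hx]; exact (hb x hx).symm
  · intro b hb
    simp only [Finset.mem_filter, Finset.mem_univ, true_and] at hb
    funext x
    dsimp only
    by_cases hx : P x
    · rw [if_pos hx, if_pos hx]
    · rw [if_neg hx]; exact (hb x hx).symm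
  · intro b hb
    simp only [Finset.mem_filter, Finset.mem_univ, true_and] at hb
    refine Finset.prod_congr rfl ?_
    intro k hk
    simp only [Finset.mem_filter, Finset.mem_univ, true_and] at hk
    refine hscope k _ _ ?_
    intro v hv
    by_cases hvP : P v
    · rw [if_pos hvP]
    · rw [if_neg hvP, hb v hvP]
      exact hkey k hk v hv hvP
end

section
/- In any tree, contracting an edge (merging two adjacent nodes into one whose cluster is the union of the two clusters, i.e., parcluster fusion) preserves the junction tree properties: the result is a tree, every factor scope is still contained in some cluster, and the running intersection property is preserved. -/
open scoped Classical

open SimpleGraph Walk in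
/-- Parcluster fusion: contracting an edge i–j of a junction tree (merging j into i,
the merged node getting cluster C i ∪ C j and inheriting all other edges) yields a tree
in which every factor scope is still contained in some cluster and the running
intersection property is preserved. The contracted graph is modelled on {x // x ≠ j}. -/
theorem stmt_16 {V Var ι : Type*} (G : SimpleGraph V) (hT : G.IsTree)
    (C : V → Set Var)
    (RIP : ∀ (a b k : V) (p : G.Walk a b), p.IsPath → k ∈ p.support → C a ∩ C b ⊆ C k)
    (S : ι → Set Var) (hassign : ∀ f : ι, ∃ k : V, S f ⊆ C k)
    (i j : V) (hij : G.Adj i j)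
    (G' : SimpleGraph {x : V // x ≠ j})
    (hG' : ∀ a b : {x : V // x ≠ j}, G'.Adj a b ↔
      (a ≠ b ∧ (G.Adj a b ∨ (a.1 = i ∧ G.Adj j b) ∨ (b.1 = i ∧ G.Adj a j))))
    (C' : {x : V // x ≠ j} → Set Var)
    (hC' : ∀ a : {x : V // x ≠ j}, C' a = if a.1 = i then C i ∪ C j else C a.1) :
    G'.IsTree ∧ (∀ f : ι, ∃ k, S f ⊆ C' k) ∧
      (∀ (a b k : {x : V // x ≠ j}) (p : G'.Walk a b), p.IsPath → k ∈ p.support →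
        C' a ∩ C' b ⊆ C' k) := by
  set i' : {x : V // x ≠ j} := ⟨i, hij.ne⟩ with hi'
  -- pushdown lemma: a walk in G' avoiding the merged vertex is a walk in G
  have PD : ∀ {a b : {x : V // x ≠ j}} (p : G'.Walk a b), i' ∉ p.support →
      ∃ q : G.Walk a.1 b.1, q.support = p.support.map Subtype.val ∧ q.length = p.length := by
    intro a b p
    induction p with
    | nil => exact fun _ => ⟨Walk.nil, by simp, by simp⟩
    | @cons a c b h p ih =>
      intro hs
      simp only [support_cons, List.mem_cons, not_or] at hs
      obtain ⟨hai', hps⟩ := hs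
      have hci' : c ≠ i' := fun hc => hps (hc ▸ p.start_mem_support)
      obtain ⟨hne, hcase⟩ := (hG' a c).1 h
      have hadj : G.Adj a.1 c.1 := by
        rcases hcase with h1 | ⟨h2, _⟩ | ⟨h3, _⟩
        · exact h1
        · exact (hai' (Subtype.ext h2 : a = i').symm).elim
        · exact (hci' (Subtype.ext h3 : c = i')).elim
      obtain ⟨q, hq1, hq2⟩ := ih hps
      exact ⟨Walk.cons hadj q, by simp [hq1], by simp [hq2]⟩
  -- decomposition of a path ending at i'
  have DEC : ∀ {a : {x : V // x ≠ j}} (P : G'.Walk a i'), P.IsPath → a ≠ i' →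
      ∃ (t : V) (Q : G.Walk a.1 t) (L : List V),
        (t = i ∨ t = j) ∧ Q.IsPath ∧ Q.length = P.length ∧ Q.support = L ++ [t] ∧
        (∀ x ∈ L, x ≠ i ∧ x ≠ j ∧ ∃ y ∈ P.support, y.1 = x) ∧
        (∀ k ∈ P.support, k ≠ i' → k.1 ∈ L) := by
    intro a P hP ha
    obtain ⟨w, h, r, hdec⟩ : ∃ w, ∃ (h : G'.Adj i' w), ∃ (r : G'.Walk w a),
        P.reverse = Walk.cons h r := by
      generalize hrev : P.reverse = Pr
      cases Pr with
      | nil => exact absurd rfl ha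
      | cons h r => exact ⟨_, h, r, rfl⟩
    have hrpath : (Walk.cons h r).IsPath := hdec ▸ hP.reverse
    rw [Walk.cons_isPath_iff] at hrpath
    obtain ⟨hr, hi'r⟩ := hrpath
    have hi'rr : i' ∉ r.reverse.support := by simpa [support_reverse] using hi'r
    obtain ⟨M, hM1, hM2⟩ := PD r.reverse hi'rr
    have hMpath : M.IsPath := by
      rw [isPath_def, hM1]
      exact (hr.reverse.support_nodup).map Subtype.val_injective
    obtain ⟨t, ht, hadj⟩ : ∃ t, (t = i ∨ t = j) ∧ G.Adj w.1 t := by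
      obtain ⟨hne, hcase⟩ := (hG' i' w).1 h
      rcases hcase with h1 | ⟨h2, h3⟩ | ⟨h4, _⟩
      · exact ⟨i, Or.inl rfl, h1.symm⟩
      · exact ⟨j, Or.inr rfl, h3.symm⟩
      · exact (h.ne' (Subtype.ext h4 : w = i')).elim
    have hMsup : ∀ x ∈ M.support, x ≠ i ∧ x ≠ j ∧ ∃ y ∈ P.support, y.1 = x := by
      intro x hx
      rw [hM1] at hx
      obtain ⟨y, hy, rfl⟩ := List.mem_map.1 hx
      have hyr : y ∈ r.support := by simpa [support_reverse] using hy
      have hyP : y ∈ P.support := by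
        have : y ∈ P.reverse.support := by rw [hdec]; simp [hyr]
        simpa [support_reverse] using this
      have hyne : y ≠ i' := fun hh => hi'r (hh ▸ hyr)
      exact ⟨fun hh => hyne (Subtype.ext hh), y.2, y, hyP, rfl⟩
    have htM : t ∉ M.support := fun hmem => by
      obtain ⟨h1, h2, _⟩ := hMsup t hmem
      rcases ht with rfl | rfl
      · exact h1 rfl
      · exact h2 rfl
    refine ⟨t, M.concat hadj, M.support, ht, ?_, ?_, by simp [support_concat], hMsup, ?_⟩
    · rw [isPath_def, support_concat]
      simp only [List.concat_eq_append, List.nodup_append, List.nodup_cons]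
      exact ⟨hMpath.support_nodup, by simp, fun a ha b hb hab => htM ((List.mem_singleton.1 hb) ▸ hab ▸ ha)⟩
    · rw [length_concat, hM2]
      have : P.reverse.length = r.length + 1 := by rw [hdec]; simp
      rw [length_reverse] at this
      simp [this]
    · intro k hk hkne
      have hk' : k ∈ P.reverse.support := by simpa [support_reverse] using hk
      rw [hdec] at hk'
      simp only [support_cons, List.mem_cons] at hk'
      rcases hk' with rfl | hk'
      · exact absurd rfl hkne
      · rw [hM1]
        simp only [support_reverse, List.map_reverse, List.mem_reverse, List.mem_map]
        exact ⟨k, hk', rfl⟩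
  -- connectivity
  have hconn : G'.Connected := by
    let f : V → {x : V // x ≠ j} := fun x => if h : x = j then i' else ⟨x, h⟩
    have hfj : f j = i' := by simp [f]
    have hfn : ∀ (x : V) (h : x ≠ j), f x = ⟨x, h⟩ := fun x h => by simp [f, h]
    have step : ∀ x y : V, G.Adj x y → G'.Reachable (f x) (f y) := by
      intro x y hxy
      by_cases hx : x = j
      · have hxy' : G.Adj j y := hx ▸ hxy
        have hy : y ≠ j := fun hh => G.loopless.irrefl j (hh ▸ hxy')
        rw [hx, hfj, hfn y hy]
        by_cases hyi : y = i
        · rw [show (⟨y, hy⟩ : {x : V // x ≠ j}) = i' from Subtype.ext hyi]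
        · exact SimpleGraph.Adj.reachable (by
            rw [hG']
            exact ⟨fun hh => hyi (congrArg Subtype.val hh).symm, Or.inr (Or.inl ⟨rfl, hxy'⟩)⟩)
      · by_cases hy : y = j
        · have hxy' : G.Adj x j := hy ▸ hxy
          rw [hy, hfj, hfn x hx]
          by_cases hxi : x = i
          · rw [show (⟨x, hx⟩ : {x : V // x ≠ j}) = i' from Subtype.ext hxi]
          · exact SimpleGraph.Adj.reachable (by
              rw [hG']
              exact ⟨fun hh => hxi (congrArg Subtype.val hh), Or.inr (Or.inr ⟨rfl, hxy'⟩)⟩)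
        · rw [hfn x hx, hfn y hy]
          exact SimpleGraph.Adj.reachable (by
            rw [hG']
            exact ⟨fun hh => hxy.ne (congrArg Subtype.val hh), Or.inl hxy⟩)
    have reach : ∀ x y : V, G.Reachable x y → G'.Reachable (f x) (f y) := by
      intro x y hxy
      obtain ⟨w⟩ := hxy
      induction w with
      | nil => exact Reachable.refl _
      | cons h p ih => exact (step _ _ h).trans ih
    rw [connected_iff]
    refine ⟨fun a b => ?_, ⟨i'⟩⟩
    have := reach a.1 b.1 (hT.isConnected.preconnected a.1 b.1)
    rwa [hfn a.1 a.2, hfn b.1 b.2, Subtype.coe_eta, Subtype.coe_eta] at this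
  -- uniqueness of paths in G gives contradictions from two paths of distinct length
  have contra : ∀ {x y : V} (P Q : G.Walk x y), P.IsPath → Q.IsPath →
      P.length ≠ Q.length → False := by
    intro x y P Q hP hQ hne
    have := hT.IsAcyclic.path_unique ⟨P, hP⟩ ⟨Q, hQ⟩
    exact hne (congrArg (fun p : G.Path x y => p.1.length) this)
  -- acyclicity
  have hacyc : G'.IsAcyclic := by
    intro v c hc
    by_cases hmem : i' ∈ c.support
    · have hc' := hc.rotate hmem
      generalize hrot : c.rotate _ hmem = c' at hc'
      clear hrot
      cases c' with
      | nil => exact absurd hc'.three_le_length (by simp)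
      | @cons _ w _ h q =>
        have hlen := hc'.three_le_length
        rw [Walk.cons_isCycle_iff] at hc'
        obtain ⟨hq, _⟩ := hc'
        have hql : 2 ≤ q.length := by simpa using hlen
        have hw : w ≠ i' := h.ne'
        obtain ⟨t, Q, L, ht, hQp, hQl, hQs, hLf, _⟩ := DEC q hq hw
        obtain ⟨t₁, ht₁, hadj₁⟩ : ∃ t₁, (t₁ = i ∨ t₁ = j) ∧ G.Adj t₁ w.1 := by
          obtain ⟨hne, hcase⟩ := (hG' i' w).1 h
          rcases hcase with h1 | ⟨h2, h3⟩ | ⟨h4, _⟩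
          · exact ⟨i, Or.inl rfl, h1⟩
          · exact ⟨j, Or.inr rfl, h3⟩
          · exact (h.ne' (Subtype.ext h4 : w = i')).elim
        by_cases htt : t₁ = t
        · subst htt
          exact contra (Walk.cons hadj₁ Walk.nil) Q.reverse (by simp [hadj₁.ne]) hQp.reverse
            (by rw [length_reverse, hQl]; simp; omega)
        · have hadj₂ : G.Adj t₁ t := by
            rcases ht₁ with rfl | rfl <;> rcases ht with rfl | rfl <;>
              first | exact hij | exact hij.symm | exact absurd rfl htt
          refine contra (Walk.cons hadj₁ Q) (Walk.cons hadj₂ Walk.nil) ?_ (by simp [hadj₂.ne])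
            (by simp only [length_cons, length_nil, hQl]; omega)
          rw [Walk.cons_isPath_iff]
          refine ⟨hQp, ?_⟩
          rw [hQs]
          intro hmem'
          rcases List.mem_append.1 hmem' with hmem' | hmem'
          · rcases ht₁ with rfl | rfl
            · exact (hLf _ hmem').1 rfl
            · exact (hLf _ hmem').2.1 rfl
          · exact htt (by simpa using hmem')
    · have hlen := hc.three_le_length
      cases c with
      | nil => simp at hlen
      | @cons _ w _ h q =>
        obtain ⟨hq, _⟩ := (Walk.cons_isCycle_iff q h).1 hc
        have hmem' : i' ∉ q.support := fun hh => hmem (by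
          rw [support_cons]
          exact List.mem_cons_of_mem _ hh)
        obtain ⟨M, hM1, hM2⟩ := PD q hmem'
        have hMp : M.IsPath := by
          rw [isPath_def, hM1]; exact hq.support_nodup.map Subtype.val_injective
        have hvne : v ≠ i' := fun hh => hmem (hh ▸ (Walk.cons h q).start_mem_support)
        have hwne : w ≠ i' := fun hh => hmem (by
          rw [support_cons]
          exact List.mem_cons_of_mem _ (hh ▸ q.start_mem_support))
        have hvw : G.Adj v.1 w.1 := by
          obtain ⟨hne, hcase⟩ := (hG' v w).1 h
          rcases hcase with h1 | ⟨h2, _⟩ | ⟨h3, _⟩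
          · exact h1
          · exact (hvne (Subtype.ext h2 : v = i')).elim
          · exact (hwne (Subtype.ext h3 : w = i')).elim
        exact contra (Walk.cons hvw Walk.nil) M.reverse (by simp [hvw.ne]) hMp.reverse
          (by rw [length_reverse, hM2]; simp only [length_cons, length_nil] at hlen ⊢; omega)
  -- cluster values
  have hCi' : C' i' = C i ∪ C j := by rw [hC', if_pos (show i'.1 = i from rfl)]
  have hCne : ∀ a : {x : V // x ≠ j}, a ≠ i' → C' a = C a.1 := by
    intro a ha
    rw [hC', if_neg (fun hh => ha (Subtype.ext hh))]
  -- key RIP ingredient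
  have X : ∀ (a k : {x : V // x ≠ j}) (P : G'.Walk a i'), P.IsPath → a ≠ i' →
      k ∈ P.support → k ≠ i' → C a.1 ∩ (C i ∪ C j) ⊆ C k.1 := by
    intro a k P hP ha hk hkne
    obtain ⟨t, Q, L, ht, hQp, hQl, hQs, hLf, hmemL⟩ := DEC P hP ha
    have hkL : k.1 ∈ L := hmemL k hk hkne
    rcases ht with h | h
    · -- t = i
      have hQip : (Q.copy rfl h).IsPath := by simpa using hQp
      have hQis : (Q.copy rfl h).support = L ++ [i] := by rw [support_copy, hQs, h]
      have hkQ : k.1 ∈ (Q.copy rfl h).support := by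
        rw [hQis]; exact List.mem_append_left _ hkL
      have hjQ : j ∉ (Q.copy rfl h).support := by
        rw [hQis]
        intro hmem'
        rcases List.mem_append.1 hmem' with hmem' | hmem'
        · exact (hLf _ hmem').2.1 rfl
        · exact hij.ne (List.mem_singleton.1 hmem').symm
      have hQj : ((Q.copy rfl h).concat hij).IsPath := by
        rw [isPath_def, support_concat]
        simp only [List.concat_eq_append, List.nodup_append, List.nodup_cons]
        exact ⟨hQip.support_nodup, by simp, fun a ha b hb hab => hjQ ((List.mem_singleton.1 hb) ▸ hab ▸ ha)⟩
      intro x hx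
      rcases hx.2 with hxi | hxj
      · exact RIP a.1 i k.1 (Q.copy rfl h) hQip hkQ ⟨hx.1, hxi⟩
      · refine RIP a.1 j k.1 ((Q.copy rfl h).concat hij) hQj ?_ ⟨hx.1, hxj⟩
        rw [support_concat]
        exact List.mem_append_left _ hkQ
    · -- t = j
      have hQjp : (Q.copy rfl h).IsPath := by simpa using hQp
      have hQjs : (Q.copy rfl h).support = L ++ [j] := by rw [support_copy, hQs, h]
      have hkQ : k.1 ∈ (Q.copy rfl h).support := by
        rw [hQjs]; exact List.mem_append_left _ hkL
      have hiQ : i ∉ (Q.copy rfl h).support := by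
        rw [hQjs]
        intro hmem'
        rcases List.mem_append.1 hmem' with hmem' | hmem'
        · exact (hLf _ hmem').1 rfl
        · exact hij.ne (List.mem_singleton.1 hmem')
      have hQi : ((Q.copy rfl h).concat hij.symm).IsPath := by
        rw [isPath_def, support_concat]
        simp only [List.concat_eq_append, List.nodup_append, List.nodup_cons]
        exact ⟨hQjp.support_nodup, by simp, fun a ha b hb hab => hiQ ((List.mem_singleton.1 hb) ▸ hab ▸ ha)⟩
      intro x hx
      rcases hx.2 with hxi | hxj
      · refine RIP a.1 i k.1 ((Q.copy rfl h).concat hij.symm) hQi ?_ ⟨hx.1, hxi⟩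
        rw [support_concat]
        exact List.mem_append_left _ hkQ
      · exact RIP a.1 j k.1 (Q.copy rfl h) hQjp hkQ ⟨hx.1, hxj⟩
  -- core of claim Y
  have YC : ∀ (a b : {x : V // x ≠ j}) (p : G'.Walk a b), p.IsPath →
      (hm : i' ∈ p.support) → a ≠ i' → b ≠ i' → C a.1 ∩ C b.1 ⊆ C i ∪ C j := by
    intro a b p hp hm ha hb
    have hp₁ : (p.takeUntil i' hm).IsPath := hp.takeUntil hm
    have hp₂ : (p.dropUntil i' hm).IsPath := hp.dropUntil hm
    obtain ⟨t₁, Q₁, L₁, ht₁, hQ₁p, _, hQ₁s, hL₁f, _⟩ := DEC (p.takeUntil i' hm) hp₁ ha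
    obtain ⟨t₂, Q₂, L₂, ht₂, hQ₂p, _, hQ₂s, hL₂f, _⟩ :=
      DEC (p.dropUntil i' hm).reverse hp₂.reverse hb
    -- disjointness of L₁ and L₂
    have hdisj : ∀ x, x ∈ L₁ → x ∈ L₂ → False := by
      intro x hx1 hx2
      obtain ⟨hxi, hxj, y, hy, rfl⟩ := hL₁f x hx1
      obtain ⟨_, _, z, hz, hyz⟩ := hL₂f y.1 hx2
      have hzy : z = y := Subtype.ext hyz
      subst hzy
      have hzi' : z ≠ i' := fun hh => hxi (congrArg Subtype.val hh)
      have hz2 : z ∈ (p.dropUntil i' hm).support := by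
        simpa [support_reverse] using hz
      have hz2' : z ∈ (p.dropUntil i' hm).support.tail := by
        rcases List.mem_cons.1 ((p.dropUntil i' hm).support_eq_cons ▸ hz2) with hh | hh
        · exact absurd hh hzi'
        · exact hh
      have hnd : ((p.takeUntil i' hm).support ++ (p.dropUntil i' hm).support.tail).Nodup := by
        have := hp.support_nodup
        rwa [← take_spec p hm, support_append] at this
      exact (List.nodup_append.1 hnd).2.2 z hy z hz2' rfl
    have hL₁nd : (L₁ ++ [t₁]).Nodup := hQ₁s ▸ hQ₁p.support_nodup
    have hL₂nd : (L₂ ++ [t₂]).Nodup := hQ₂s ▸ hQ₂p.support_nodup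
    have hL₂nd' : L₂.reverse.Nodup := List.nodup_reverse.2 (List.nodup_append.1 hL₂nd).1
    have ht₂L₁ : t₂ ∉ L₁ := fun hh => by
      rcases ht₂ with rfl | rfl
      · exact (hL₁f _ hh).1 rfl
      · exact (hL₁f _ hh).2.1 rfl
    have ht₁L₂ : t₁ ∉ L₂ := fun hh => by
      rcases ht₁ with rfl | rfl
      · exact (hL₂f _ hh).1 rfl
      · exact (hL₂f _ hh).2.1 rfl
    have hQ₂rs : Q₂.reverse.support = t₂ :: L₂.reverse := by
      rw [support_reverse, hQ₂s]; simp
    have ht₂L₂ : t₂ ∉ L₂ := fun hh => by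
      rcases ht₂ with rfl | rfl
      · exact (hL₂f _ hh).1 rfl
      · exact (hL₂f _ hh).2.1 rfl
    by_cases htt : t₁ = t₂
    · subst htt
      have hR : (Q₁.append Q₂.reverse).IsPath := by
        rw [isPath_def, support_append, hQ₂rs, hQ₁s]
        simp only [List.tail_cons]
        rw [List.nodup_append]
        refine ⟨hL₁nd, hL₂nd', ?_⟩
        intro x hx y hx' hxy
        subst hxy
        have hx'' := List.mem_reverse.1 hx'
        rcases List.mem_append.1 hx with hx | hx
        · exact hdisj x hx hx''
        · have hxe : x = t₁ := by simpa using hx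
          subst hxe
          exact ht₁L₂ hx''
      have htR : t₁ ∈ (Q₁.append Q₂.reverse).support := by
        rw [support_append, hQ₁s]
        exact List.mem_append_left _ (List.mem_append_right _ (List.mem_singleton_self _))
      intro x hx
      have := RIP a.1 b.1 t₁ (Q₁.append Q₂.reverse) hR htR hx
      rcases ht₁ with rfl | rfl
      · exact Or.inl this
      · exact Or.inr this
    · have hadj₂ : G.Adj t₁ t₂ := by
        rcases ht₁ with rfl | rfl <;> rcases ht₂ with rfl | rfl <;>
          first | exact hij | exact hij.symm | exact absurd rfl htt
      have hR : (Q₁.append (Walk.cons hadj₂ Q₂.reverse)).IsPath := by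
        rw [isPath_def, support_append, support_cons]
        simp only [List.tail_cons]
        rw [hQ₁s, hQ₂rs, List.nodup_append]
        refine ⟨hL₁nd, ?_, ?_⟩
        · exact List.nodup_cons.2 ⟨by simpa using ht₂L₂, hL₂nd'⟩
        · intro x hx y hx' hxy
          subst hxy
          rcases List.mem_append.1 hx with hx | hx
          · rcases List.mem_cons.1 hx' with rfl | hx'
            · exact ht₂L₁ hx
            · exact hdisj x hx (List.mem_reverse.1 hx')
          · have hxe : x = t₁ := by simpa using hx
            subst hxe
            rcases List.mem_cons.1 hx' with hh | hh
            · exact htt hh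
            · exact ht₁L₂ (List.mem_reverse.1 hh)
      have htR : t₁ ∈ (Q₁.append (Walk.cons hadj₂ Q₂.reverse)).support := by
        rw [support_append, hQ₁s]
        exact List.mem_append_left _ (List.mem_append_right _ (List.mem_singleton_self _))
      intro x hx
      have := RIP a.1 b.1 t₁ (Q₁.append (Walk.cons hadj₂ Q₂.reverse)) hR htR hx
      rcases ht₁ with rfl | rfl
      · exact Or.inl this
      · exact Or.inr this
  -- assembling the three conclusions
  refine ⟨⟨hconn, hacyc⟩, ?_, ?_⟩
  · intro f
    obtain ⟨k, hk⟩ := hassign f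
    by_cases hkj : k = j
    · subst hkj
      exact ⟨i', by rw [hCi']; exact hk.trans Set.subset_union_right⟩
    · refine ⟨⟨k, hkj⟩, ?_⟩
      rw [hC']
      by_cases hki : k = i
      · subst hki
        simp only [if_pos rfl]
        exact hk.trans Set.subset_union_left
      · simp only [if_neg hki]
        exact hk
  · intro a b k p hp hk
    by_cases hmem : i' ∈ p.support
    · have hY : C' a ∩ C' b ⊆ C i ∪ C j := by
        by_cases ha : a = i'
        · subst ha; rw [hCi']; exact fun x hx => hx.1
        · by_cases hb : b = i'
          · subst hb; rw [hCi']; exact fun x hx => hx.2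
          · rw [hCne a ha, hCne b hb]
            exact YC a b p hp hmem ha hb
      by_cases hkne : k = i'
      · subst hkne; rw [hCi']; exact hY
      have hk' : k ∈ (p.takeUntil i' hmem).support ∨ k ∈ (p.dropUntil i' hmem).support := by
        rw [← take_spec p hmem] at hk
        exact (Walk.mem_support_append_iff _ _).1 hk
      rcases hk' with hk1 | hk2
      · by_cases ha : a = i'
        · exfalso
          subst ha
          have hp₁ : (p.takeUntil i' hmem).IsPath := hp.takeUntil hmem
          have hnil : p.takeUntil i' hmem = Walk.nil := by
            have := SimpleGraph.Path.loop_eq ⟨p.takeUntil i' hmem, hp₁⟩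
            exact congrArg Subtype.val this
          rw [hnil] at hk1
          simp only [support_nil, List.mem_singleton] at hk1
          exact hkne hk1
        · have hX := X a k (p.takeUntil i' hmem) (hp.takeUntil hmem) ha hk1 hkne
          rw [hCne k hkne]
          intro x hx
          refine hX ⟨?_, hY hx⟩
          rw [hCne a ha] at hx
          exact hx.1
      · by_cases hb : b = i'
        · exfalso
          subst hb
          have hp₂ : (p.dropUntil i' hmem).IsPath := hp.dropUntil hmem
          have hnil : p.dropUntil i' hmem = Walk.nil := by
            have := SimpleGraph.Path.loop_eq ⟨p.dropUntil i' hmem, hp₂⟩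
            exact congrArg Subtype.val this
          rw [hnil] at hk2
          simp only [support_nil, List.mem_singleton] at hk2
          exact hkne hk2
        · have hk2' : k ∈ (p.dropUntil i' hmem).reverse.support := by
            simpa [support_reverse] using hk2
          have hX := X b k (p.dropUntil i' hmem).reverse (hp.dropUntil hmem).reverse hb hk2' hkne
          rw [hCne k hkne]
          intro x hx
          refine hX ⟨?_, hY hx⟩
          rw [hCne b hb] at hx
          exact hx.2
    · have hane : a ≠ i' := fun hh => hmem (hh ▸ p.start_mem_support)
      have hbne : b ≠ i' := fun hh => hmem (hh ▸ p.end_mem_support)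
      have hkne : k ≠ i' := fun hh => hmem (hh ▸ hk)
      obtain ⟨q, hq1, _⟩ := PD p hmem
      have hqp : q.IsPath := by
        rw [isPath_def, hq1]
        exact hp.support_nodup.map Subtype.val_injective
      have hkq : k.1 ∈ q.support := by
        rw [hq1]
        exact List.mem_map.2 ⟨k, hk, rfl⟩
      rw [hCne a hane, hCne b hbne, hCne k hkne]
      exact RIP a.1 b.1 k.1 q hqp hkq
end
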